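/- Let A, B, C be pairwise commuting n × n complex Hermitian matrices with A ⪰ B ⪰ C in the Loewner order (i.e., A − B and B − C are positive semidefinite), and let a, b, c be real numbers with a ≥ 0, c ≥ 0 and a + c ≥ |b|. Then the matrix a·(A−B)(A−C) + b·(B−A)(B−C) + c·(C−A)(C−B) is positive semidefinite. -/

import Mathlib

open Matrix
open scoped ComplexOrder

noncomputable def Matrix.PosSemidef.sqrt {m : ℕ} {X : Matrix (Fin m) (Fin m) ℂ}
    (hX : X.PosSemidef) : Matrix (Fin m) (Fin m) ℂ :=
  (hX.1.eigenvectorUnitary : Matrix (Fin m) (Fin m) ℂ) *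
    diagonal ((↑) ∘ Real.sqrt ∘ hX.1.eigenvalues) * star (hX.1.eigenvectorUnitary : Matrix (Fin m) (Fin m) ℂ)

lemma Matrix.PosSemidef.posSemidef_sqrt {m : ℕ} {X : Matrix (Fin m) (Fin m) ℂ}
    (hX : X.PosSemidef) : hX.sqrt.PosSemidef := by
  unfold Matrix.PosSemidef.sqrt
  have h := (Matrix.posSemidef_diagonal_iff (R := ℂ)
    (d := ((↑) ∘ Real.sqrt ∘ hX.1.eigenvalues : Fin m → ℂ))).mpr (fun i => by
      simp only [Function.comp_apply]
      exact_mod_cast Real.sqrt_nonneg _)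
  exact h.mul_mul_conjTranspose_same (hX.1.eigenvectorUnitary : Matrix (Fin m) (Fin m) ℂ)

lemma Matrix.PosSemidef.sqrt_mul_self {m : ℕ} {X : Matrix (Fin m) (Fin m) ℂ}
    (hX : X.PosSemidef) : hX.sqrt * hX.sqrt = X := by
  unfold Matrix.PosSemidef.sqrt
  set U : Matrix (Fin m) (Fin m) ℂ := (hX.1.eigenvectorUnitary : Matrix (Fin m) (Fin m) ℂ)
  have hUU : star U * U = 1 := Matrix.mem_unitaryGroup_iff'.mp hX.1.eigenvectorUnitary.2
  have hspec : X = U * diagonal ((↑) ∘ hX.1.eigenvalues) * star U := hX.1.spectral_theorem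
  have hd : diagonal (((↑) ∘ Real.sqrt ∘ hX.1.eigenvalues : Fin m → ℂ)) *
      diagonal ((↑) ∘ Real.sqrt ∘ hX.1.eigenvalues) = diagonal ((↑) ∘ hX.1.eigenvalues) := by
    rw [diagonal_mul_diagonal]
    congr 1
    funext i
    simp only [Function.comp_apply]
    rw [← Complex.ofReal_mul, Real.mul_self_sqrt (hX.eigenvalues_nonneg i)]
  conv_rhs => rw [hspec]
  rw [← hd]
  calc U * diagonal ((↑) ∘ Real.sqrt ∘ hX.1.eigenvalues) * star U *
        (U * diagonal ((↑) ∘ Real.sqrt ∘ hX.1.eigenvalues) * star U)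
      = U * diagonal ((↑) ∘ Real.sqrt ∘ hX.1.eigenvalues) * (star U * U) *
        diagonal ((↑) ∘ Real.sqrt ∘ hX.1.eigenvalues) * star U := by simp only [mul_assoc]
    _ = _ := by rw [hUU, mul_one]; simp only [mul_assoc]

private lemma sqrt_commute {m : ℕ} {X Y : Matrix (Fin m) (Fin m) ℂ}
    (hX : X.PosSemidef) (h : X * Y = Y * X) : hX.sqrt * Y = Y * hX.sqrt := by
  set U : Matrix (Fin m) (Fin m) ℂ := (hX.1.eigenvectorUnitary : Matrix (Fin m) (Fin m) ℂ)
  have hUU : star U * U = 1 := Matrix.mem_unitaryGroup_iff'.mp hX.1.eigenvectorUnitary.2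
  have hUU' : U * star U = 1 := Matrix.mem_unitaryGroup_iff.mp hX.1.eigenvectorUnitary.2
  set d : Fin m → ℂ := (↑) ∘ hX.1.eigenvalues with hd
  set d' : Fin m → ℂ := (↑) ∘ Real.sqrt ∘ hX.1.eigenvalues with hd'
  set N : Matrix (Fin m) (Fin m) ℂ := star U * Y * U with hN
  have hYN : Y = U * N * star U := by
    rw [hN]
    rw [show star U * Y * U = star U * (Y * U) from by rw [mul_assoc]]
    rw [show U * (star U * (Y * U)) * star U = (U * star U) * Y * (U * star U) from by
      simp only [mul_assoc]]
    rw [hUU', one_mul, mul_one]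
  have hspec : X = U * diagonal d * star U := hX.1.spectral_theorem
  have hND : N * diagonal d = diagonal d * N := by
    have h1 : star U * (X * Y) * U = star U * (Y * X) * U := by rw [h]
    have h2 : star U * X * U = diagonal d := by
      rw [hspec]
      rw [show star U * (U * diagonal d * star U) * U
          = (star U * U) * diagonal d * (star U * U) from by simp only [mul_assoc]]
      rw [hUU, one_mul, mul_one]
    calc N * diagonal d = (star U * Y * U) * (star U * X * U) := by rw [h2]
      _ = star U * (Y * (U * star U) * X) * U := by simp only [mul_assoc]
      _ = star U * (Y * X) * U := by rw [hUU']; simp only [mul_one, mul_assoc]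
      _ = star U * (X * Y) * U := by rw [h]
      _ = star U * (X * (U * star U) * Y) * U := by rw [hUU']; simp only [mul_one, mul_assoc]
      _ = (star U * X * U) * (star U * Y * U) := by simp only [mul_assoc]
      _ = diagonal d * N := by rw [h2]
  have hND' : N * diagonal d' = diagonal d' * N := by
    ext i j
    have hij := congrFun (congrFun hND i) j
    simp only [Matrix.mul_diagonal, Matrix.diagonal_mul] at hij ⊢
    rcases eq_or_ne (N i j) 0 with h0 | h0
    · simp [h0]
    · have hdd : d j = d i := by
        have hz : N i j * (d j - d i) = 0 := by linear_combination hij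
        rcases mul_eq_zero.mp hz with h' | h'
        · exact absurd h' h0
        · exact sub_eq_zero.mp h'
      have : hX.1.eigenvalues j = hX.1.eigenvalues i := by
        have := hdd
        simp only [hd, Function.comp_apply] at this
        exact_mod_cast this
      simp [hd', Function.comp_apply, this, mul_comm]
  have hsqrt : hX.sqrt = U * diagonal d' * star U := rfl
  rw [hsqrt, hYN]
  calc U * diagonal d' * star U * (U * N * star U)
      = U * (diagonal d' * (star U * U) * N) * star U := by simp only [mul_assoc]
    _ = U * (diagonal d' * N) * star U := by rw [hUU]; simp only [mul_one, mul_assoc, one_mul]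
    _ = U * (N * diagonal d') * star U := by rw [hND']
    _ = U * N * star U * (U * diagonal d' * star U) := by
        rw [show U * N * star U * (U * diagonal d' * star U)
            = U * (N * (star U * U) * diagonal d') * star U from by simp only [mul_assoc]]
        rw [hUU]; simp only [mul_one, mul_assoc, one_mul]

private lemma psd_mul {m : ℕ} {X Y : Matrix (Fin m) (Fin m) ℂ}
    (hX : X.PosSemidef) (hY : Y.PosSemidef) (h : X * Y = Y * X) :
    (X * Y).PosSemidef := by
  have hc := sqrt_commute hX h
  have key : X * Y = hX.sqrt * Y * hX.sqrtᴴ := by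
    rw [hX.posSemidef_sqrt.1.eq]
    calc X * Y = hX.sqrt * hX.sqrt * Y := by rw [hX.sqrt_mul_self]
      _ = hX.sqrt * (hX.sqrt * Y) := by rw [mul_assoc]
      _ = hX.sqrt * (Y * hX.sqrt) := by rw [hc]
      _ = hX.sqrt * Y * hX.sqrt := by rw [mul_assoc]
  rw [key]
  exact hY.mul_mul_conjTranspose_same hX.sqrt

private lemma psd_smul {m : ℕ} {X : Matrix (Fin m) (Fin m) ℂ} (hX : X.PosSemidef)
    {r : ℝ} (hr : 0 ≤ r) : ((r : ℂ) • X).PosSemidef := by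
  refine Matrix.PosSemidef.of_dotProduct_mulVec_nonneg ?_ ?_
  · unfold Matrix.IsHermitian
    rw [Matrix.conjTranspose_smul, hX.1.eq]
    congr 1
    simp [Complex.ext_iff]
  · intro x
    rw [Matrix.smul_mulVec, dotProduct_smul]
    have h0 : (0 : ℂ) ≤ (r : ℂ) := by
      rw [Complex.le_def]
      simp [hr]
    have := hX.dotProduct_mulVec_nonneg x
    calc (0 : ℂ) = (r : ℂ) * 0 := by ring
      _ ≤ (r : ℂ) * (star x ⬝ᵥ X *ᵥ x) := by
          exact mul_le_mul_of_nonneg_left this h0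
    

theorem stmt_18 {n : ℕ} (A B C : Matrix (Fin n) (Fin n) ℂ)
    (hA : A.IsHermitian) (hB : B.IsHermitian) (hC : C.IsHermitian)
    (hABc : A * B = B * A) (hACc : A * C = C * A) (hBCc : B * C = C * B)
    (hAB : (A - B).PosSemidef) (hBC : (B - C).PosSemidef)
    (a b c : ℝ) (ha : 0 ≤ a) (hc : 0 ≤ c) (hb : |b| ≤ a + c) :
    ((a : ℂ) • ((A - B) * (A - C)) + (b : ℂ) • ((B - A) * (B - C))
      + (c : ℂ) • ((C - A) * (C - B))).PosSemidef := by
  set X := A - B with hXdef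
  set Y := B - C with hYdef
  have hXY : X * Y = Y * X := by
    rw [hXdef, hYdef]
    simp only [sub_mul, mul_sub]
    rw [← hABc, ← hACc, ← hBCc]
    abel
  have h1 : (X * X).PosSemidef := psd_mul hAB hAB rfl
  have h2 : (Y * Y).PosSemidef := psd_mul hBC hBC rfl
  have h3 : (X * Y).PosSemidef := psd_mul hAB hBC hXY
  have key : (a : ℂ) • ((A - B) * (A - C)) + (b : ℂ) • ((B - A) * (B - C))
      + (c : ℂ) • ((C - A) * (C - B))
      = (a : ℂ) • (X * X) + ((a + c - b : ℝ) : ℂ) • (X * Y) + (c : ℂ) • (Y * Y) := by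
    rw [hXdef, hYdef]
    simp only [sub_mul, mul_sub, smul_sub, smul_add]
    push_cast
    simp only [← hABc, ← hACc, ← hBCc]
    module
  rw [key]
  refine ((psd_smul h1 ha).add (psd_smul h3 ?_)).add (psd_smul h2 hc)
  have := abs_le.mp hb
  linarith [this.2]
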